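/- arXiv:2509.16694 — 2 statements merged into one kernel-verified Lean document; each statement's English description precedes it below -/
import Mathlib

section
/- (Covariance formula.) Let 0 ≤ s < t ≤ N and x, y ∈ ℤ². Then 𝔼[W_{s,t}(x) W_{s,t}(y)] = E_{x−y}[exp(β_N² Σ_{n=s+1}^t h(S_{2n}))]. Furthermore, with σ̄_N² = e^{β_N²} β_N², one has E_x[∏_{n=s+1}^t (1 + β_N² h(S_{2n}))] ≤ 𝔼[W_{s,t}(x) W_{s,t}(0)] ≤ E_x[∏_{n=s+1}^t (1 + σ̄_N² h(S_{2n}))]. -/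
open MeasureTheory ProbabilityTheory Filter
open scoped NNReal BigOperators Topology

noncomputable section

/-- Euclidean norm on `ℤ × ℤ`. -/
def nrm (x : ℤ × ℤ) : ℝ := Real.sqrt ((x.1 : ℝ) ^ 2 + (x.2 : ℝ) ^ 2)

/-- The four nearest-neighbour steps of the simple random walk on `ℤ²`. -/
def steps : Finset (ℤ × ℤ) := {(1, 0), (-1, 0), (0, 1), (0, -1)}

/-- The walk path started at `x` built from the first `t` increments `ε`. -/
def walkPath (t : ℕ) (x : ℤ × ℤ) (ε : Fin t → ℤ × ℤ) (n : ℕ) : ℤ × ℤ :=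
  x + ∑ i ∈ Finset.univ.filter (fun i : Fin t => (i : ℕ) < n), ε i

/-- Expectation over the simple random walk on `ℤ²` started at `x`, of a functional
depending on the path up to time `t` (each of the `4^t` step sequences has weight `4⁻ᵗ`). -/
def Ewalk (t : ℕ) (x : ℤ × ℤ) (f : (ℕ → ℤ × ℤ) → ℝ) : ℝ :=
  (4 : ℝ)⁻¹ ^ t * ∑ ε ∈ Fintype.piFinset (fun _ : Fin t => steps), f (walkPath t x ε)

/-- `pwalk n x = P(S_n = x)` for the simple random walk started at `0`. -/
def pwalk (n : ℕ) (x : ℤ × ℤ) : ℝ := Ewalk n 0 (fun S => if S n = x then 1 else 0)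

/-- `α = (a+1)/(a+2) − 1`. -/
def alphaOf (a : ℝ) : ℝ := (a + 1) / (a + 2) - 1

/-- The normalized Bessel function `J̃_α(z) = Γ(α+1) ∑ (−1)ⁿ/(Γ(n+α+1) n!) (z/2)^{2n}`,
with `α = alphaOf a`. -/
def Jt (a : ℝ) (z : ℝ) : ℝ :=
  Real.Gamma (alphaOf a + 1) *
    ∑' n : ℕ, ((-1 : ℝ) ^ n / (Real.Gamma ((n : ℝ) + alphaOf a + 1) * (n.factorial : ℝ)))
      * (z / 2) ^ (2 * n)

/-- `z_a`, the first positive zero of `J̃_α`. -/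
def za (a : ℝ) : ℝ := sInf {z : ℝ | 0 < z ∧ Jt a z = 0}

/-- The intermediate-disorder inverse temperature `β_N = 𝔠_a β̂ / (log N)^((a+2)/2)`,
with `𝔠_a = 2^((a−1)/2) (a+2)`. -/
def betaN (a bh : ℝ) (N : ℕ) : ℝ :=
  ((2 : ℝ) ^ ((a - 1) / 2) * (a + 2)) * bh / (Real.log N) ^ ((a + 2) / 2)

/-- Partition function `W_{s,t}(x)` for a fixed realization `ωf` of the field. -/
def Wst (β : ℝ) (ωf : ℕ → ℤ × ℤ → ℝ) (s t : ℕ) (x : ℤ × ℤ) : ℝ :=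
  Ewalk t x (fun S => Real.exp (∑ n ∈ Finset.Icc (s + 1) t, (β * ωf n (S n) - β ^ 2 / 2)))


set_option linter.unusedSectionVars false
set_option linter.unreachableTactic false
set_option linter.unusedTactic false

namespace CovAux
open Real Set
open scoped ENNReal


lemma integral_sq_exp_neg_mul_sq {b : ℝ} (hb : 0 < b) :
    ∫ x : ℝ, x ^ 2 * Real.exp (-b * x ^ 2) = (1 / b) ^ ((3:ℝ)/2) * Real.sqrt π / 2 := by
  have h1 : ∫ x : ℝ, x ^ 2 * Real.exp (-b * x ^ 2)
      = 2 * ∫ x in Ioi (0:ℝ), x ^ 2 * Real.exp (-b * x ^ 2) := by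
    rw [← integral_comp_abs (f := fun x => x ^ 2 * Real.exp (-b * x ^ 2))]
    congr 1 with x
    rw [sq_abs]
  rw [h1]
  have h2 : ∫ x in Ioi (0:ℝ), x ^ 2 * Real.exp (-b * x ^ 2)
      = ∫ y in Ioi (0:ℝ), (2:ℝ)⁻¹ * (y ^ ((3:ℝ)/2 - 1) * Real.exp (-(b * y))) := by
    rw [← integral_comp_rpow_Ioi_of_pos (p := 2) two_pos
      (g := fun y => (2:ℝ)⁻¹ * (y ^ ((3:ℝ)/2 - 1) * Real.exp (-(b * y))))]
    refine setIntegral_congr_fun measurableSet_Ioi (fun x hx => ?_)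
    have hx0 : (0:ℝ) < x := hx
    have hx2 : x ^ (2:ℝ) = x ^ 2 := by
      rw [show (2:ℝ) = ((2:ℕ):ℝ) by norm_num, Real.rpow_natCast]
    have h32 : (x ^ (2:ℝ)) ^ ((3:ℝ)/2 - 1) = x := by
      rw [← Real.rpow_mul hx0.le]
      norm_num
    simp only [smul_eq_mul, h32, hx2]
    rw [show (2:ℝ) - 1 = 1 by norm_num, Real.rpow_one, neg_mul]
    ring_nf
    have h12 : ((x:ℝ) ^ 2) ^ ((1:ℝ)/2) = x := by
      rw [← Real.rpow_natCast x 2, ← Real.rpow_mul hx0.le]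
      norm_num
    rw [h12]
    ring
  have hgamma : Real.Gamma ((3:ℝ)/2) = Real.sqrt π / 2 := by
    rw [show (3:ℝ)/2 = 1/2 + 1 by norm_num, Real.Gamma_add_one (by norm_num),
      Real.Gamma_one_half_eq]
    ring
  rw [h2, integral_const_mul, Real.integral_rpow_mul_exp_neg_mul_Ioi (by norm_num) hb, hgamma]
  ring

lemma integrable_sq_exp_neg_mul_sq {b : ℝ} (hb : 0 < b) :
    Integrable (fun x : ℝ => x ^ 2 * Real.exp (-b * x ^ 2)) := by
  have := integrable_rpow_mul_exp_neg_mul_sq hb (s := 2) (by norm_num)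
  refine this.congr ?_
  filter_upwards with x
  rw [show (2:ℝ) = ((2:ℕ):ℝ) by norm_num, Real.rpow_natCast]



lemma integral_gaussianReal_eq {v : ℝ≥0} (hv : v ≠ 0) (f : ℝ → ℝ) :
    ∫ x, f x ∂(gaussianReal 0 v) = ∫ x, gaussianPDFReal 0 v x * f x := by
  rw [gaussianReal_of_var_ne_zero 0 hv]
  have hmeas : Measurable fun x => (gaussianPDFReal 0 v x).toNNReal :=
    (measurable_gaussianPDFReal 0 v).real_toNNReal
  have hpdf : (gaussianPDF 0 v) = fun x => (((gaussianPDFReal 0 v x).toNNReal : ℝ≥0) : ℝ≥0∞) := rfl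
  rw [hpdf, integral_withDensity_eq_integral_smul hmeas]
  congr 1 with x
  rw [NNReal.smul_def, Real.coe_toNNReal _ (gaussianPDFReal_nonneg 0 v x), smul_eq_mul]

lemma integrable_gaussianReal_iff {v : ℝ≥0} (hv : v ≠ 0) (f : ℝ → ℝ) :
    Integrable f (gaussianReal 0 v) ↔ Integrable (fun x => gaussianPDFReal 0 v x * f x) := by
  rw [gaussianReal_of_var_ne_zero 0 hv]
  have hmeas : Measurable fun x => (gaussianPDFReal 0 v x).toNNReal :=
    (measurable_gaussianPDFReal 0 v).real_toNNReal
  have hpdf : (gaussianPDF 0 v) = fun x => (((gaussianPDFReal 0 v x).toNNReal : ℝ≥0) : ℝ≥0∞) := rfl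
  rw [hpdf, integrable_withDensity_iff_integrable_smul hmeas]
  constructor <;> intro hI <;> refine hI.congr ?_ <;> filter_upwards with x <;>
    rw [NNReal.smul_def, Real.coe_toNNReal _ (gaussianPDFReal_nonneg 0 v x), smul_eq_mul]

lemma pdf_mul_exp {v : ℝ≥0} (hv : v ≠ 0) (x : ℝ) :
    gaussianPDFReal 0 v x * Real.exp x = Real.exp (v/2) * gaussianPDFReal (v:ℝ) v x := by
  have hv' : (0:ℝ) < v := lt_of_le_of_ne v.coe_nonneg (by exact_mod_cast (Ne.symm hv))
  have hexp : -(x - 0)^2/(2*(v:ℝ)) + x = (v:ℝ)/2 + -(x - (v:ℝ))^2/(2*(v:ℝ)) := by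
    field_simp
    ring
  unfold gaussianPDFReal
  rw [mul_assoc, ← Real.exp_add, hexp, Real.exp_add]
  ring

lemma integral_exp_gaussianReal (v : ℝ≥0) :
    ∫ x, Real.exp x ∂(gaussianReal 0 v) = Real.exp (v/2) := by
  by_cases hv : v = 0
  · subst hv; rw [gaussianReal_zero_var, integral_dirac]; simp
  · rw [integral_gaussianReal_eq hv]
    calc ∫ x, gaussianPDFReal 0 v x * Real.exp x
        = ∫ x, Real.exp (v/2) * gaussianPDFReal (v:ℝ) v x := by
          congr 1 with x; exact pdf_mul_exp hv x
      _ = Real.exp (v/2) := by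
          rw [integral_const_mul, integral_gaussianPDFReal_eq_one (v:ℝ) hv, mul_one]

lemma integrable_exp_gaussianReal (v : ℝ≥0) :
    Integrable Real.exp (gaussianReal 0 v) := by
  by_cases hv : v = 0
  · subst hv; rw [gaussianReal_zero_var]; refine (integrable_const (Real.exp 0)).congr ?_
    rw [Filter.EventuallyEq, MeasureTheory.ae_dirac_eq]
    simp
  · rw [integrable_gaussianReal_iff hv]
    refine (((integrable_gaussianPDFReal (v:ℝ) v).const_mul (Real.exp (v/2))).congr ?_)
    filter_upwards with x
    exact (pdf_mul_exp hv x).symm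

lemma pdf_mul_sq {v : ℝ≥0} (hv : v ≠ 0) (x : ℝ) :
    gaussianPDFReal 0 v x * x ^ 2
      = (Real.sqrt (2 * π * v))⁻¹ * (x ^ 2 * Real.exp (-((2*(v:ℝ))⁻¹) * x ^ 2)) := by
  have hv' : (0:ℝ) < v := lt_of_le_of_ne v.coe_nonneg (by exact_mod_cast (Ne.symm hv))
  unfold gaussianPDFReal
  have : -(x - 0) ^ 2 / (2 * (v:ℝ)) = -((2*(v:ℝ))⁻¹) * x ^ 2 := by
    field_simp
    ring
  rw [this]; ring

lemma integral_sq_gaussianReal (v : ℝ≥0) :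
    ∫ x, x ^ 2 ∂(gaussianReal 0 v) = v := by
  by_cases hv : v = 0
  · subst hv; rw [gaussianReal_zero_var, integral_dirac]; simp
  · have hv' : (0:ℝ) < v := lt_of_le_of_ne v.coe_nonneg (by exact_mod_cast (Ne.symm hv))
    have hb : (0:ℝ) < (2*(v:ℝ))⁻¹ := by positivity
    rw [integral_gaussianReal_eq hv]
    calc ∫ x, gaussianPDFReal 0 v x * x ^ 2
        = ∫ x, (Real.sqrt (2 * π * v))⁻¹ * (x ^ 2 * Real.exp (-((2*(v:ℝ))⁻¹) * x ^ 2)) := by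
          congr 1 with x; exact pdf_mul_sq hv x
      _ = (Real.sqrt (2 * π * v))⁻¹ * ((1 / (2*(v:ℝ))⁻¹) ^ ((3:ℝ)/2) * Real.sqrt π / 2) := by
          rw [integral_const_mul, integral_sq_exp_neg_mul_sq hb]
      _ = v := by
          rw [one_div, inv_inv]
          have h2v : (0:ℝ) < 2 * v := by positivity
          have e1 : (2*(v:ℝ)) ^ ((3:ℝ)/2) = (2*(v:ℝ)) * Real.sqrt (2*(v:ℝ)) := by
            rw [show (3:ℝ)/2 = 1 + 1/2 by norm_num, Real.rpow_add h2v, Real.rpow_one,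
              ← Real.sqrt_eq_rpow]
          have e2 : Real.sqrt (2 * π * (v:ℝ)) = Real.sqrt (2*(v:ℝ)) * Real.sqrt π := by
            rw [← Real.sqrt_mul h2v.le]
            ring_nf
          rw [e1, e2]
          have hs1 : Real.sqrt (2*(v:ℝ)) ≠ 0 := by positivity
          have hs2 : Real.sqrt π ≠ 0 := by positivity
          field_simp

lemma integrable_sq_gaussianReal (v : ℝ≥0) :
    Integrable (fun x : ℝ => x ^ 2) (gaussianReal 0 v) := by
  by_cases hv : v = 0
  · subst hv; rw [gaussianReal_zero_var]; refine (integrable_const ((0:ℝ) ^ 2)).congr ?_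
    rw [Filter.EventuallyEq, MeasureTheory.ae_dirac_eq]
    simp
  · have hv' : (0:ℝ) < v := lt_of_le_of_ne v.coe_nonneg (by exact_mod_cast (Ne.symm hv))
    have hb : (0:ℝ) < (2*(v:ℝ))⁻¹ := by positivity
    rw [integrable_gaussianReal_iff hv]
    refine ((integrable_sq_exp_neg_mul_sq hb).const_mul ((Real.sqrt (2 * π * v))⁻¹)).congr ?_
    filter_upwards with x
    exact (pdf_mul_sq hv x).symm




lemma neg_mem_steps : ∀ z ∈ steps, -z ∈ steps := by decide

def extFn (t : ℕ) (ε : Fin t → ℤ × ℤ) (i : ℕ) : ℤ × ℤ :=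
  if h : i < t then ε ⟨i, h⟩ else 0

lemma walkPath_eq_range {t n : ℕ} (hn : n ≤ t) (x : ℤ × ℤ) (ε : Fin t → ℤ × ℤ) :
    walkPath t x ε n = x + ∑ i ∈ Finset.range n, extFn t ε i := by
  unfold walkPath
  congr 1
  rw [Finset.sum_filter]
  have e1 : ∀ i : Fin t, (if (i:ℕ) < n then ε i else 0)
      = (fun k => if k < n then extFn t ε k else 0) (i:ℕ) := by
    intro i
    simp only [extFn, i.isLt, dif_pos]
  calc ∑ i : Fin t, (if (i:ℕ) < n then ε i else 0)
      = ∑ i : Fin t, (fun k => if k < n then extFn t ε k else 0) (i:ℕ) :=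
        Finset.sum_congr rfl fun i _ => e1 i
    _ = ∑ k ∈ Finset.range t, (if k < n then extFn t ε k else 0) :=
        Fin.sum_univ_eq_sum_range (fun k => if k < n then extFn t ε k else 0) t
    _ = ∑ k ∈ (Finset.range t).filter (fun k => k < n), extFn t ε k :=
        (Finset.sum_filter _ _).symm
    _ = ∑ i ∈ Finset.range n, extFn t ε i := by
        congr 1
        ext k
        simp only [Finset.mem_filter, Finset.mem_range]
        omega

def ileave (t : ℕ) (ε₁ ε₂ : Fin t → ℤ × ℤ) (i : Fin (2*t)) : ℤ × ℤ :=
  if (i:ℕ) % 2 = 0 then ε₁ ⟨(i:ℕ)/2, by omega⟩ else -ε₂ ⟨(i:ℕ)/2, by omega⟩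

lemma ileave_sum (t : ℕ) (ε₁ ε₂ : Fin t → ℤ × ℤ) :
    ∀ n, n ≤ t →
      ∑ i ∈ Finset.range (2*n), extFn (2*t) (ileave t ε₁ ε₂) i
        = ∑ i ∈ Finset.range n, extFn t ε₁ i - ∑ i ∈ Finset.range n, extFn t ε₂ i := by
  intro n
  induction n with
  | zero => intro _; simp
  | succ m ih =>
    intro hn
    have hm : m ≤ t := by omega
    rw [show 2*(m+1) = (2*m)+1+1 by ring, Finset.sum_range_succ, Finset.sum_range_succ,
      Finset.sum_range_succ, Finset.sum_range_succ, ih hm]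
    have h1 : extFn (2*t) (ileave t ε₁ ε₂) (2*m) = extFn t ε₁ m := by
      unfold extFn
      rw [dif_pos (by omega : 2*m < 2*t), dif_pos (by omega : m < t)]
      simp only [ileave]
      rw [if_pos (by omega : (2*m) % 2 = 0)]
      congr 1
      exact Fin.ext (by simp only [Fin.val_mk]; omega)
    have h2 : extFn (2*t) (ileave t ε₁ ε₂) (2*m+1) = -extFn t ε₂ m := by
      unfold extFn
      rw [dif_pos (by omega : 2*m+1 < 2*t), dif_pos (by omega : m < t)]
      simp only [ileave]
      rw [if_neg (by omega : ¬ (2*m+1) % 2 = 0)]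
      congr 2
      exact Fin.ext (by simp only [Fin.val_mk]; omega)
    rw [h1, h2]
    abel

lemma ileave_left_inv (t : ℕ) (δ : Fin (2*t) → ℤ × ℤ) :
    ileave t (fun j : Fin t => δ ⟨2*(j:ℕ), by omega⟩)
      (fun j : Fin t => -δ ⟨2*(j:ℕ)+1, by omega⟩) = δ := by
  funext k
  simp only [ileave]
  by_cases hk : (k:ℕ) % 2 = 0
  · rw [if_pos hk]
    congr 1
    exact Fin.ext (by simp only [Fin.val_mk]; omega)
  · rw [if_neg hk, neg_neg]
    congr 1
    exact Fin.ext (by simp only [Fin.val_mk]; omega)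

lemma ileave_right_inv (t : ℕ) (ε₁ ε₂ : Fin t → ℤ × ℤ) :
    ((fun j : Fin t => ileave t ε₁ ε₂ ⟨2*(j:ℕ), by omega⟩),
     (fun j : Fin t => -ileave t ε₁ ε₂ ⟨2*(j:ℕ)+1, by omega⟩)) = (ε₁, ε₂) := by
  refine Prod.ext ?_ ?_ <;> funext j <;> simp only [ileave]
  · rw [if_pos (by simp only [Fin.val_mk]; omega : ((⟨2*(j:ℕ), by omega⟩ : Fin (2*t)) : ℕ) % 2 = 0)]
    congr 1
    exact Fin.ext (by simp only [Fin.val_mk]; omega)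
  · rw [if_neg (by simp only [Fin.val_mk]; omega :
      ¬ ((⟨2*(j:ℕ)+1, by omega⟩ : Fin (2*t)) : ℕ) % 2 = 0), neg_neg]
    congr 1
    exact Fin.ext (by simp only [Fin.val_mk]; omega)

lemma sum_pair (t : ℕ) (x y : ℤ × ℤ) (Φ : (ℕ → ℤ × ℤ) → ℝ)
    (hΦ : ∀ S S' : ℕ → ℤ × ℤ, (∀ n, n ≤ t → S (2*n) = S' (2*n)) → Φ S = Φ S') :
    ∑ δ ∈ Fintype.piFinset (fun _ : Fin (2*t) => steps), Φ (walkPath (2*t) (x-y) δ)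
      = ∑ ε₁ ∈ Fintype.piFinset (fun _ : Fin t => steps),
          ∑ ε₂ ∈ Fintype.piFinset (fun _ : Fin t => steps),
            Φ (fun m => walkPath t x ε₁ (m/2) - walkPath t y ε₂ (m/2)) := by
  rw [← Finset.sum_product']
  refine Finset.sum_nbij'
    (i := fun δ => ((fun j : Fin t => δ ⟨2*(j:ℕ), by omega⟩),
                    (fun j : Fin t => -δ ⟨2*(j:ℕ)+1, by omega⟩)))
    (j := fun p => ileave t p.1 p.2) ?_ ?_ ?_ ?_ ?_
  · intro δ hδ
    rw [Fintype.mem_piFinset] at hδ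
    rw [Finset.mem_product]
    constructor <;> rw [Fintype.mem_piFinset] <;> intro j
    · exact hδ _
    · exact neg_mem_steps _ (hδ _)
  · intro p hp
    rw [Finset.mem_product] at hp
    obtain ⟨h1, h2⟩ := hp
    rw [Fintype.mem_piFinset] at h1 h2 ⊢
    intro i
    show ileave t p.1 p.2 i ∈ steps
    simp only [ileave]
    split
    · exact h1 _
    · exact neg_mem_steps _ (h2 _)
  · intro δ _
    exact ileave_left_inv t δ
  · intro p _
    exact ileave_right_inv t p.1 p.2
  · intro δ _
    refine hΦ _ _ (fun n hn => ?_)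
    have e1 : walkPath (2*t) (x-y) δ (2*n)
        = (x - y) + ∑ i ∈ Finset.range (2*n), extFn (2*t) δ i :=
      walkPath_eq_range (by omega) _ _
    have e2 := ileave_sum t (fun j : Fin t => δ ⟨2*(j:ℕ), by omega⟩)
      (fun j : Fin t => -δ ⟨2*(j:ℕ)+1, by omega⟩) n hn
    rw [ileave_left_inv t δ] at e2
    rw [e1, e2, show (2*n)/2 = n by omega, walkPath_eq_range hn, walkPath_eq_range hn]
    abel




variable {Ω : Type} [MeasurableSpace Ω] (μ : Measure Ω) [IsProbabilityMeasure μ]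
  (ω : ℕ → ℤ × ℤ → Ω → ℝ)

lemma L2mul {f g : Ω → ℝ} (hf : MemLp f 2 μ) (hg : MemLp g 2 μ) :
    Integrable (fun x => f x * g x) μ := by
  have h2 : (1:ℝ≥0∞)/1 = 1/2 + 1/2 := by
    rw [ENNReal.div_add_div_same, one_div_one, one_add_one_eq_two]
    exact (ENNReal.div_self two_ne_zero ENNReal.ofNat_ne_top).symm
  have := hf.smul (r := 1) hg
  rw [memLp_one_iff_integrable] at this
  refine this.congr ?_
  filter_upwards with x
  simp [mul_comm]

lemma omega_memLp2
    (hmeas : ∀ n x, Measurable (ω n x))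
    (hgauss : ∀ c : (ℕ × (ℤ × ℤ)) →₀ ℝ, ∃ v : ℝ≥0,
      Measure.map (fun η => ∑ p ∈ c.support, c p * ω p.1 p.2 η) μ = gaussianReal 0 v)
    (p : ℕ × (ℤ × ℤ)) : MemLp (ω p.1 p.2) 2 μ := by
  obtain ⟨v, hv⟩ := hgauss (Finsupp.single p 1)
  have hsupp : (Finsupp.single p (1:ℝ)).support = {p} :=
    Finsupp.support_single_ne_zero p one_ne_zero
  have hfun : (fun η => ∑ q ∈ (Finsupp.single p (1:ℝ)).support,
      (Finsupp.single p (1:ℝ)) q * ω q.1 q.2 η) = ω p.1 p.2 := by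
    funext η
    rw [hsupp, Finset.sum_singleton, Finsupp.single_eq_same, one_mul]
  rw [hfun] at hv
  have hm : Measurable (ω p.1 p.2) := hmeas _ _
  rw [memLp_two_iff_integrable_sq hm.aestronglyMeasurable]
  have hI : Integrable (fun x : ℝ => x ^ 2) (Measure.map (ω p.1 p.2) μ) := by
    rw [hv]; exact integrable_sq_gaussianReal v
  exact (integrable_map_measure (measurable_id.pow_const 2).aestronglyMeasurable
    hm.aemeasurable).mp hI

lemma mgf_lin (h : ℤ × ℤ → ℝ)
    (hmeas : ∀ n x, Measurable (ω n x))
    (hgauss : ∀ c : (ℕ × (ℤ × ℤ)) →₀ ℝ, ∃ v : ℝ≥0,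
      Measure.map (fun η => ∑ p ∈ c.support, c p * ω p.1 p.2 η) μ = gaussianReal 0 v)
    (hcov : ∀ n m : ℕ, ∀ y z : ℤ × ℤ,
      (∫ η, ω n y η * ω m z η ∂μ) = if n = m then h (y - z) else 0)
    {ι : Type} (A : Finset ι) (b : ι → ℝ) (P : ι → ℕ × (ℤ × ℤ)) :
    Integrable (fun η => Real.exp (∑ i ∈ A, b i * ω (P i).1 (P i).2 η)) μ ∧
    ∫ η, Real.exp (∑ i ∈ A, b i * ω (P i).1 (P i).2 η) ∂μ =
      Real.exp (2⁻¹ * ∑ i ∈ A, ∑ j ∈ A, (b i * b j) *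
        (if (P i).1 = (P j).1 then h ((P i).2 - (P j).2) else 0)) := by
  classical
  set L : Ω → ℝ := fun η => ∑ i ∈ A, b i * ω (P i).1 (P i).2 η with hLdef
  have hLmeas : Measurable L :=
    Finset.measurable_sum _ (fun i _ => (hmeas _ _).const_mul _)
  set c : (ℕ × (ℤ × ℤ)) →₀ ℝ := ∑ i ∈ A, Finsupp.single (P i) (b i) with hc
  obtain ⟨v, hv⟩ := hgauss c
  have hfun : (fun η => ∑ q ∈ c.support, c q * ω q.1 q.2 η) = L := by
    funext η
    have e0 : ∑ q ∈ c.support, c q * ω q.1 q.2 η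
        = Finsupp.liftAddHom (fun q => AddMonoidHom.mulRight (ω q.1 q.2 η)) c := by
      simp [Finsupp.liftAddHom_apply, Finsupp.sum]
    rw [e0, hc, map_sum]
    simp [Finsupp.liftAddHom_apply_single]
    rfl
  rw [hfun] at hv
  have hMem : ∀ p : ℕ × (ℤ × ℤ), MemLp (ω p.1 p.2) 2 μ := omega_memLp2 μ ω hmeas hgauss
  have hInt2 : ∀ p q : ℕ × (ℤ × ℤ),
      Integrable (fun η => ω p.1 p.2 η * ω q.1 q.2 η) μ :=
    fun p q => L2mul μ (hMem p) (hMem q)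
  have hv2 : (v:ℝ) = ∑ i ∈ A, ∑ j ∈ A, (b i * b j) *
      (if (P i).1 = (P j).1 then h ((P i).2 - (P j).2) else 0) := by
    have e1 : (v:ℝ) = ∫ η, (L η) ^ 2 ∂μ := by
      have hm2 : Measurable fun x : ℝ => x ^ 2 := by fun_prop
      rw [← integral_sq_gaussianReal v, ← hv,
        integral_map (f := fun x : ℝ => x ^ 2) hLmeas.aemeasurable hm2.aestronglyMeasurable]
    rw [e1]
    have e2 : ∀ η, (L η) ^ 2 = ∑ i ∈ A, ∑ j ∈ A,
        (b i * b j) * (ω (P i).1 (P i).2 η * ω (P j).1 (P j).2 η) := by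
      intro η
      rw [hLdef, sq, Finset.sum_mul_sum]
      refine Finset.sum_congr rfl fun i _ => Finset.sum_congr rfl fun j _ => by ring
    simp_rw [e2]
    rw [integral_finset_sum _ (fun i _ => integrable_finset_sum _
      (fun j _ => ((hInt2 (P i) (P j)).const_mul _)))]
    refine Finset.sum_congr rfl fun i _ => ?_
    rw [integral_finset_sum _ (fun j _ => ((hInt2 (P i) (P j)).const_mul _))]
    refine Finset.sum_congr rfl fun j _ => ?_
    rw [integral_const_mul, hcov]
  constructor
  · exact (integrable_map_measure Real.measurable_exp.aestronglyMeasurable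
      hLmeas.aemeasurable).mp (by rw [hv]; exact integrable_exp_gaussianReal v)
  · have : ∫ η, Real.exp (L η) ∂μ = ∫ x, Real.exp x ∂(Measure.map L μ) :=
      (integral_map hLmeas.aemeasurable Real.measurable_exp.aestronglyMeasurable).symm
    rw [this, hv, integral_exp_gaussianReal, ← hv2]
    congr 1
    ring


end CovAux

/-- Lemma 2.1, covariance formula: `𝔼[W_{s,t}(x) W_{s,t}(y)]` equals the
walk MGF started from `x − y`, together with the sandwich bounds. -/
theorem covariance_formula (a : ℝ) (ha : -1 < a)
    (h : ℤ × ℤ → ℝ) (hpos : ∀ x, 0 ≤ h x) (hbdd : ∃ C : ℝ, ∀ x, h x ≤ C)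
    (hone : h 0 = 1)
    (hasymp : Filter.Tendsto (fun x : ℤ × ℤ => h x * nrm x ^ 2 / Real.log (nrm x) ^ a)
      Filter.cofinite (𝓝 1))
    (hconv : ∃ h₀ : ℤ × ℤ → ℝ, (∀ y, 0 ≤ h₀ y) ∧
      ∀ x, HasSum (fun y => h₀ y * h₀ (x - y)) (h x))
    (bh : ℝ) (hbh0 : 0 ≤ bh)
    {Ω : Type} [MeasurableSpace Ω] (μ : Measure Ω) [IsProbabilityMeasure μ]
    (ω : ℕ → ℤ × ℤ → Ω → ℝ)
    (hmeas : ∀ n x, Measurable (ω n x))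
    (hgauss : ∀ c : (ℕ × (ℤ × ℤ)) →₀ ℝ, ∃ v : ℝ≥0,
      Measure.map (fun η => ∑ p ∈ c.support, c p * ω p.1 p.2 η) μ = gaussianReal 0 v)
    (hcov : ∀ n m : ℕ, ∀ y z : ℤ × ℤ,
      (∫ η, ω n y η * ω m z η ∂μ) = if n = m then h (y - z) else 0)
    (N : ℕ) (hN : 2 ≤ N) (s t : ℕ) (hst : s < t) (htN : t ≤ N) (x y : ℤ × ℤ) :
    (∫ η, Wst (betaN a bh N) (fun n z => ω n z η) s t x *
          Wst (betaN a bh N) (fun n z => ω n z η) s t y ∂μ) =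
      Ewalk (2 * t) (x - y) (fun S =>
        Real.exp (betaN a bh N ^ 2 * ∑ n ∈ Finset.Icc (s + 1) t, h (S (2 * n)))) ∧
    Ewalk (2 * t) x (fun S =>
        ∏ n ∈ Finset.Icc (s + 1) t, (1 + betaN a bh N ^ 2 * h (S (2 * n)))) ≤
      (∫ η, Wst (betaN a bh N) (fun n z => ω n z η) s t x *
            Wst (betaN a bh N) (fun n z => ω n z η) s t 0 ∂μ) ∧
    (∫ η, Wst (betaN a bh N) (fun n z => ω n z η) s t x *
          Wst (betaN a bh N) (fun n z => ω n z η) s t 0 ∂μ) ≤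
      Ewalk (2 * t) x (fun S =>
        ∏ n ∈ Finset.Icc (s + 1) t,
          (1 + Real.exp (betaN a bh N ^ 2) * betaN a bh N ^ 2 * h (S (2 * n)))) := by
  classical
  set β := betaN a bh N with hβ
  obtain ⟨h₀, hh₀⟩ := hconv
  clear hasymp ha hbh0 hN htN
  -- basic facts about h from the covariance structure
  have hMem : ∀ p : ℕ × (ℤ × ℤ), MemLp (ω p.1 p.2) 2 μ :=
    CovAux.omega_memLp2 μ ω hmeas hgauss
  have hInt2 : ∀ p q : ℕ × (ℤ × ℤ),
      Integrable (fun η => ω p.1 p.2 η * ω q.1 q.2 η) μ :=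
    fun p q => CovAux.L2mul μ (hMem p) (hMem q)
  have hsymm : ∀ u : ℤ × ℤ, h (-u) = h u := by
    intro u
    have h1 := hcov 0 0 u 0
    have h2 := hcov 0 0 0 u
    rw [if_pos rfl] at h1 h2
    rw [sub_zero] at h1
    rw [zero_sub] at h2
    rw [← h1, ← h2]
    simp_rw [mul_comm]
  have hle1 : ∀ u : ℤ × ℤ, h u ≤ 1 := by
    intro u
    have e0 : (0:ℝ) ≤ ∫ η, (ω 0 u η - ω 0 0 η)^2 ∂μ :=
      integral_nonneg (fun η => sq_nonneg _)
    have hIa : Integrable (fun η => ω 0 u η * ω 0 u η) μ := hInt2 (0, u) (0, u)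
    have hIb : Integrable (fun η => ω 0 u η * ω 0 0 η) μ := hInt2 (0, u) (0, 0)
    have hIc : Integrable (fun η => ω 0 0 η * ω 0 0 η) μ := hInt2 (0, 0) (0, 0)
    have expand : ∫ η, (ω 0 u η - ω 0 0 η)^2 ∂μ
        = (∫ η, ω 0 u η * ω 0 u η ∂μ) - 2*(∫ η, ω 0 u η * ω 0 0 η ∂μ)
          + ∫ η, ω 0 0 η * ω 0 0 η ∂μ := by
      have e1 : ∀ η, (ω 0 u η - ω 0 0 η)^2
          = ω 0 u η * ω 0 u η - 2*(ω 0 u η * ω 0 0 η) + ω 0 0 η * ω 0 0 η :=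
        fun η => by ring
      simp_rw [e1]
      have i2 : Integrable (fun η => 2 * (ω 0 u η * ω 0 0 η)) μ := hIb.const_mul 2
      have i1 : Integrable (fun η => ω 0 u η * ω 0 u η - 2 * (ω 0 u η * ω 0 0 η)) μ :=
        hIa.sub i2
      rw [integral_add i1 hIc, integral_sub hIa i2, integral_const_mul]
    rw [hcov, hcov, hcov, if_pos rfl, if_pos rfl, if_pos rfl, sub_self, sub_zero, sub_zero,
      hone] at expand
    rw [expand] at e0
    linarith
  -- the per-pair covariance computation
  have pair : ∀ (x' y' : ℤ × ℤ) (ε₁ ε₂ : Fin t → ℤ × ℤ),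
      Integrable (fun η =>
        Real.exp (∑ n ∈ Finset.Icc (s+1) t, (β * ω n (walkPath t x' ε₁ n) η - β^2/2))
        * Real.exp (∑ n ∈ Finset.Icc (s+1) t, (β * ω n (walkPath t y' ε₂ n) η - β^2/2))) μ ∧
      (∫ η, Real.exp (∑ n ∈ Finset.Icc (s+1) t, (β * ω n (walkPath t x' ε₁ n) η - β^2/2))
        * Real.exp (∑ n ∈ Finset.Icc (s+1) t, (β * ω n (walkPath t y' ε₂ n) η - β^2/2)) ∂μ)
        = Real.exp (β^2 * ∑ n ∈ Finset.Icc (s+1) t,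
            h (walkPath t x' ε₁ n - walkPath t y' ε₂ n)) := by
    intro x' y' ε₁ ε₂
    set S1 : ℕ → ℤ × ℤ := walkPath t x' ε₁ with hS1
    set S2 : ℕ → ℤ × ℤ := walkPath t y' ε₂ with hS2
    set I : Finset ℕ := Finset.Icc (s+1) t with hI
    set A : Finset (ℕ × Bool) := I ×ˢ Finset.univ with hA
    set P : ℕ × Bool → ℕ × (ℤ × ℤ) := fun q => (q.1, if q.2 then S1 q.1 else S2 q.1) with hP
    obtain ⟨hIb, hEq⟩ := CovAux.mgf_lin μ ω h hmeas hgauss hcov A (fun _ => β) P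
    set D : ℝ := (I.card : ℝ) * (β^2/2) with hD
    have hL : ∀ η, ∑ q ∈ A, β * ω (P q).1 (P q).2 η
        = (∑ n ∈ I, β * ω n (S1 n) η) + (∑ n ∈ I, β * ω n (S2 n) η) := by
      intro η
      rw [hA, Finset.sum_product, ← Finset.sum_add_distrib]
      refine Finset.sum_congr rfl fun n _ => ?_
      rw [Fintype.sum_bool]
      simp [hP]
    have hptw : ∀ η, Real.exp (∑ n ∈ I, (β * ω n (S1 n) η - β^2/2))
        * Real.exp (∑ n ∈ I, (β * ω n (S2 n) η - β^2/2))
        = Real.exp (-(2*D)) * Real.exp (∑ q ∈ A, β * ω (P q).1 (P q).2 η) := by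
      intro η
      rw [← Real.exp_add, ← Real.exp_add, hL η]
      congr 1
      rw [Finset.sum_sub_distrib, Finset.sum_sub_distrib, Finset.sum_const, hD]
      simp only [nsmul_eq_mul]
      ring
    have key : ∀ c : ℤ × ℤ, ∀ n ∈ I, ∑ r ∈ A, (β*β) * (if n = r.1 then h (c - (P r).2) else 0)
        = β*β*(h (c - S1 n) + h (c - S2 n)) := by
      intro c n hn
      rw [hA, Finset.sum_product]
      have e1 : ∀ m ∈ I, ∑ w ∈ (Finset.univ : Finset Bool),
          (β*β) * (if n = m then h (c - (P (m,w)).2) else 0)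
          = if n = m then (β*β) * (h (c - S1 m) + h (c - S2 m)) else 0 := by
        intro m _
        rw [Fintype.sum_bool]
        by_cases hm : n = m
        · rw [if_pos hm]
          simp only [hP, if_pos rfl, hm]
          simp
          ring
        · simp [hm]
      rw [Finset.sum_congr rfl e1, Finset.sum_ite_eq, if_pos hn]
    have hVal : ∑ q ∈ A, ∑ r ∈ A, ((fun _ : ℕ × Bool => β) q * (fun _ : ℕ × Bool => β) r) *
        (if (P q).1 = (P r).1 then h ((P q).2 - (P r).2) else 0)
        = β^2 * ∑ n ∈ I, (2 + 2 * h (S1 n - S2 n)) := by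
      rw [Finset.mul_sum]
      conv_lhs => rw [hA]
      rw [Finset.sum_product]
      refine Finset.sum_congr rfl fun n hn => ?_
      rw [Fintype.sum_bool]
      have kt := key (S1 n) n hn
      have kf := key (S2 n) n hn
      have ept : (P (n, true)).1 = n ∧ (P (n, true)).2 = S1 n := by simp [hP]
      have epf : (P (n, false)).1 = n ∧ (P (n, false)).2 = S2 n := by simp [hP]
      calc (∑ r ∈ A, (β*β) * (if n = r.1 then h (S1 n - (P r).2) else 0))
            + (∑ r ∈ A, (β*β) * (if n = r.1 then h (S2 n - (P r).2) else 0))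
          = β*β*(h (S1 n - S1 n) + h (S1 n - S2 n)) + β*β*(h (S2 n - S1 n) + h (S2 n - S2 n)) := by
            rw [kt, kf]
        _ = β^2 * (2 + 2 * h (S1 n - S2 n)) := by
            rw [sub_self, sub_self, hone]
            have : h (S2 n - S1 n) = h (S1 n - S2 n) := by
              rw [← neg_sub (S1 n) (S2 n), hsymm]
            rw [this]
            ring
    constructor
    · refine (hIb.const_mul (Real.exp (-(2*D)))).congr ?_
      filter_upwards with η
      exact (hptw η).symm
    · calc ∫ η, Real.exp (∑ n ∈ I, (β * ω n (S1 n) η - β^2/2))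
            * Real.exp (∑ n ∈ I, (β * ω n (S2 n) η - β^2/2)) ∂μ
          = ∫ η, Real.exp (-(2*D)) * Real.exp (∑ q ∈ A, β * ω (P q).1 (P q).2 η) ∂μ :=
            integral_congr_ae (Filter.Eventually.of_forall hptw)
        _ = Real.exp (-(2*D)) * ∫ η, Real.exp (∑ q ∈ A, β * ω (P q).1 (P q).2 η) ∂μ :=
            integral_const_mul _ _
        _ = Real.exp (-(2*D)) * Real.exp (2⁻¹ * (β^2 * ∑ n ∈ I, (2 + 2 * h (S1 n - S2 n)))) := by
            rw [hEq, hVal]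
        _ = Real.exp (β^2 * ∑ n ∈ I, h (S1 n - S2 n)) := by
            rw [← Real.exp_add]
            congr 1
            rw [Finset.sum_add_distrib, Finset.sum_const, ← Finset.mul_sum, hD]
            simp only [nsmul_eq_mul]
            ring
  -- part 1: the covariance formula
  have part1 : ∀ x' y' : ℤ × ℤ,
      (∫ η, Wst β (fun n z => ω n z η) s t x' * Wst β (fun n z => ω n z η) s t y' ∂μ)
      = Ewalk (2*t) (x' - y') (fun S =>
          Real.exp (β^2 * ∑ n ∈ Finset.Icc (s+1) t, h (S (2*n)))) := by
    intro x' y'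
    set Φ : (ℕ → ℤ × ℤ) → ℝ := fun S =>
      Real.exp (β^2 * ∑ n ∈ Finset.Icc (s+1) t, h (S (2*n))) with hΦdef
    have hΦ : ∀ S S' : ℕ → ℤ × ℤ, (∀ n, n ≤ t → S (2*n) = S' (2*n)) → Φ S = Φ S' := by
      intro S S' hag
      have e : (∑ n ∈ Finset.Icc (s+1) t, h (S (2*n)))
          = ∑ n ∈ Finset.Icc (s+1) t, h (S' (2*n)) :=
        Finset.sum_congr rfl fun n hn => by rw [hag n (Finset.mem_Icc.mp hn).2]
      simp only [hΦdef]
      rw [e]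
    have step1 : ∀ η, Wst β (fun n z => ω n z η) s t x' * Wst β (fun n z => ω n z η) s t y'
        = ((4:ℝ)⁻¹^t * (4:ℝ)⁻¹^t) *
          ∑ ε₁ ∈ Fintype.piFinset (fun _ : Fin t => steps),
            ∑ ε₂ ∈ Fintype.piFinset (fun _ : Fin t => steps),
              (Real.exp (∑ n ∈ Finset.Icc (s+1) t, (β * ω n (walkPath t x' ε₁ n) η - β^2/2))
              * Real.exp (∑ n ∈ Finset.Icc (s+1) t, (β * ω n (walkPath t y' ε₂ n) η - β^2/2))) := by
      intro η
      simp only [Wst, Ewalk]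
      rw [mul_mul_mul_comm, Finset.sum_mul_sum]
    rw [integral_congr_ae (Filter.Eventually.of_forall step1), integral_const_mul,
      integral_finset_sum _ (fun ε₁ _ => integrable_finset_sum _ (fun ε₂ _ => (pair x' y' ε₁ ε₂).1))]
    have step2 : ∀ ε₁ ∈ Fintype.piFinset (fun _ : Fin t => steps),
        (∫ η, ∑ ε₂ ∈ Fintype.piFinset (fun _ : Fin t => steps),
          (Real.exp (∑ n ∈ Finset.Icc (s+1) t, (β * ω n (walkPath t x' ε₁ n) η - β^2/2))
          * Real.exp (∑ n ∈ Finset.Icc (s+1) t, (β * ω n (walkPath t y' ε₂ n) η - β^2/2))) ∂μ)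
        = ∑ ε₂ ∈ Fintype.piFinset (fun _ : Fin t => steps),
            Φ (fun m => walkPath t x' ε₁ (m/2) - walkPath t y' ε₂ (m/2)) := by
      intro ε₁ _
      rw [integral_finset_sum _ (fun ε₂ _ => (pair x' y' ε₁ ε₂).1)]
      refine Finset.sum_congr rfl fun ε₂ _ => ?_
      rw [(pair x' y' ε₁ ε₂).2]
      have e : (∑ n ∈ Finset.Icc (s+1) t, h (walkPath t x' ε₁ (2*n/2) - walkPath t y' ε₂ (2*n/2)))
          = ∑ n ∈ Finset.Icc (s+1) t, h (walkPath t x' ε₁ n - walkPath t y' ε₂ n) :=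
        Finset.sum_congr rfl fun n _ => by rw [show 2*n/2 = n by omega]
      simp only [hΦdef]
      rw [e]
    rw [Finset.sum_congr rfl step2]
    show _ = Ewalk (2*t) (x' - y') Φ
    simp only [Ewalk]
    have hpow : ((4:ℝ)⁻¹)^(2*t) = ((4:ℝ)⁻¹)^t * ((4:ℝ)⁻¹)^t := by
      rw [two_mul, pow_add]
    rw [hpow, CovAux.sum_pair t x' y' Φ hΦ]
  have hb2 : (0:ℝ) ≤ β^2 := sq_nonneg β
  have bound_low : ∀ S : ℕ → ℤ × ℤ,
      (∏ n ∈ Finset.Icc (s+1) t, (1 + β^2 * h (S (2*n))))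
        ≤ Real.exp (β^2 * ∑ n ∈ Finset.Icc (s+1) t, h (S (2*n))) := by
    intro S
    rw [Finset.mul_sum, Real.exp_sum]
    refine Finset.prod_le_prod
      (fun n _ => by
        have := mul_nonneg hb2 (hpos (S (2*n)))
        linarith) (fun n _ => ?_)
    have := Real.add_one_le_exp (β^2 * h (S (2*n)))
    linarith
  have bound_up : ∀ S : ℕ → ℤ × ℤ,
      Real.exp (β^2 * ∑ n ∈ Finset.Icc (s+1) t, h (S (2*n)))
        ≤ ∏ n ∈ Finset.Icc (s+1) t, (1 + Real.exp (β^2) * β^2 * h (S (2*n))) := by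
    intro S
    rw [Finset.mul_sum, Real.exp_sum]
    refine Finset.prod_le_prod (fun n _ => (Real.exp_pos _).le) (fun n _ => ?_)
    set u : ℝ := β^2 * h (S (2*n)) with hu
    have hu0 : (0:ℝ) ≤ u := mul_nonneg hb2 (hpos _)
    have huβ : u ≤ β^2 := by
      have h1 := hle1 (S (2*n))
      calc u = β^2 * h (S (2*n)) := hu
        _ ≤ β^2 * 1 := mul_le_mul_of_nonneg_left h1 hb2
        _ = β^2 := mul_one _
    have h2 : 1 - u ≤ Real.exp (-u) := by
      have := Real.add_one_le_exp (-u)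
      linarith
    have h1 : (1 - u) * Real.exp u ≤ 1 := by
      calc (1-u)*Real.exp u ≤ Real.exp (-u) * Real.exp u :=
            mul_le_mul_of_nonneg_right h2 (Real.exp_pos u).le
        _ = 1 := by rw [← Real.exp_add]; simp
    have h3 : Real.exp u ≤ 1 + u * Real.exp u := by nlinarith
    have h5 : u * Real.exp u ≤ u * Real.exp (β^2) :=
      mul_le_mul_of_nonneg_left (Real.exp_le_exp.2 huβ) hu0
    have h6 : u * Real.exp (β^2) = Real.exp (β^2) * β^2 * h (S (2*n)) := by
      rw [hu]; ring
    linarith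
  have hp10 := part1 x 0
  rw [sub_zero] at hp10
  refine ⟨part1 x y, ?_, ?_⟩
  · rw [hp10]
    simp only [Ewalk]
    exact mul_le_mul_of_nonneg_left
      (Finset.sum_le_sum fun δ _ => bound_low (walkPath (2*t) x δ)) (by positivity)
  · rw [hp10]
    simp only [Ewalk]
    exact mul_le_mul_of_nonneg_left
      (Finset.sum_le_sum fun δ _ => bound_up (walkPath (2*t) x δ)) (by positivity)
end
end

section
/- (Generating function of the recursive polynomials via Bessel functions.) Let a > −1. For all z ∈ [0, (a+2) z_a /2) and all x ∈ [0,1], the series Σ_{k=0}^∞ f_k(x) z^{2k} converges and equals J̃_α((2/(a+2)) z x^{(a+2)/2}) / J̃_α((2/(a+2)) z). -/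
open MeasureTheory ProbabilityTheory Filter
open scoped NNReal BigOperators Topology

noncomputable section

/-- The recursive sequence of polynomials `f_0 ≡ 1`,
`f_{k+1}(x) = ∫_0^1 (1 − max(t,x)) tᵃ f_k(t) dt`. -/
def frec (a : ℝ) : ℕ → ℝ → ℝ
  | 0 => fun _ => 1
  | k + 1 => fun x => ∫ t in (0 : ℝ)..1, (1 - max t x) * t ^ a * frec a k t

namespace Aux
open intervalIntegral
variable {a : ℝ}

lemma alpha1_eq : alphaOf a + 1 = (a + 1) / (a + 2) := by unfold alphaOf; ring

lemma alpha1_pos (ha : -1 < a) : 0 < alphaOf a + 1 := by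
  have h1 : 0 < a + 1 := by linarith
  have h2 : 0 < a + 2 := by linarith
  rw [alpha1_eq]; positivity

lemma gamma_shift_pos (ha : -1 < a) (n : ℕ) : 0 < Real.Gamma ((n : ℝ) + alphaOf a + 1) := by
  apply Real.Gamma_pos_of_pos
  have h := alpha1_pos ha
  have h2 : (0:ℝ) ≤ n := n.cast_nonneg
  linarith

lemma gamma_lb (ha : -1 < a) (n : ℕ) :
    Real.Gamma (alphaOf a + 2) * (n.factorial : ℝ) ≤ Real.Gamma (((n:ℝ) + 1) + alphaOf a + 1) := by
  have ha1 := alpha1_pos ha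
  induction n with
  | zero => simp; apply le_of_eq; congr 1; ring
  | succ n ih =>
    have hpos : (0:ℝ) < (n:ℝ) + 1 + alphaOf a + 1 := by
      have : (0:ℝ) ≤ n := n.cast_nonneg; linarith
    have key : Real.Gamma ((((n:ℕ)+1:ℕ):ℝ) + 1 + alphaOf a + 1)
        = ((n:ℝ) + 1 + alphaOf a + 1) * Real.Gamma ((n:ℝ) + 1 + alphaOf a + 1) := by
      rw [show ((((n:ℕ)+1:ℕ):ℝ) + 1 + alphaOf a + 1) = ((n:ℝ) + 1 + alphaOf a + 1) + 1 by
        push_cast; ring]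
      exact Real.Gamma_add_one (ne_of_gt hpos)
    rw [key]
    have hfac : ((n+1).factorial : ℝ) = ((n:ℝ)+1) * (n.factorial : ℝ) := by
      rw [Nat.factorial_succ]; push_cast; ring
    rw [hfac]
    have hGpos : 0 < Real.Gamma ((n:ℝ) + 1 + alphaOf a + 1) := by
      have h := gamma_shift_pos ha (n+1); push_cast at h; linarith
    calc Real.Gamma (alphaOf a + 2) * (((n:ℝ)+1) * (n.factorial:ℝ))
        = ((n:ℝ)+1) * (Real.Gamma (alphaOf a + 2) * (n.factorial:ℝ)) := by ring
      _ ≤ ((n:ℝ)+1) * Real.Gamma ((n:ℝ) + 1 + alphaOf a + 1) := by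
          apply mul_le_mul_of_nonneg_left ih; positivity
      _ ≤ ((n:ℝ) + 1 + alphaOf a + 1) * Real.Gamma ((n:ℝ) + 1 + alphaOf a + 1) := by
          apply mul_le_mul_of_nonneg_right _ hGpos.le; linarith

/-- master summability -/
lemma summable_base (ha : -1 < a) {r : ℝ} (hr : 0 ≤ r) :
    Summable fun n : ℕ => r ^ n / (Real.Gamma ((n : ℝ) + alphaOf a + 1) * (n.factorial : ℝ)) := by
  have ha1 := alpha1_pos ha
  have hG2 : 0 < Real.Gamma (alphaOf a + 2) := by
    apply Real.Gamma_pos_of_pos; linarith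
  rw [← summable_nat_add_iff 1]
  have hsum : Summable fun n : ℕ => (r / Real.Gamma (alphaOf a + 2)) * (r ^ n / (n.factorial : ℝ)) :=
    (Real.summable_pow_div_factorial r).mul_left _
  apply hsum.of_nonneg_of_le
  · intro n
    have := gamma_shift_pos ha (n+1)
    push_cast at this ⊢
    positivity
  · intro n
    have hg := gamma_lb ha n
    have hGpos := gamma_shift_pos ha (n+1)
    push_cast at hGpos ⊢
    have hfac : (0:ℝ) < (n+1).factorial := by positivity
    have hfn : (1:ℝ) ≤ ((n+1).factorial : ℝ) := by exact_mod_cast Nat.one_le_iff_ne_zero.mpr (Nat.factorial_ne_zero _)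
    have hden : Real.Gamma (alphaOf a + 2) * (n.factorial:ℝ)
        ≤ Real.Gamma ((n:ℝ) + 1 + alphaOf a + 1) * ((n+1).factorial : ℝ) := by
      calc Real.Gamma (alphaOf a + 2) * (n.factorial:ℝ)
          ≤ Real.Gamma ((n:ℝ) + 1 + alphaOf a + 1) := hg
        _ = Real.Gamma ((n:ℝ) + 1 + alphaOf a + 1) * 1 := by ring
        _ ≤ Real.Gamma ((n:ℝ) + 1 + alphaOf a + 1) * ((n+1).factorial : ℝ) := by
            apply mul_le_mul_of_nonneg_left hfn hGpos.le
    have hfacpos : (0:ℝ) < (n.factorial:ℝ) := by positivity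
    calc r ^ (n+1) / (Real.Gamma ((n:ℝ) + 1 + alphaOf a + 1) * ((n+1).factorial : ℝ))
        ≤ r ^ (n+1) / (Real.Gamma (alphaOf a + 2) * (n.factorial:ℝ)) :=
          div_le_div_of_nonneg_left (by positivity) (by positivity) hden
      _ = (r / Real.Gamma (alphaOf a + 2)) * (r ^ n / (n.factorial : ℝ)) := by
          rw [pow_succ]; field_simp
/-- the `n`-th term of the Jt series. -/
def jterm (a z : ℝ) (n : ℕ) : ℝ :=
  ((-1 : ℝ) ^ n / (Real.Gamma ((n : ℝ) + alphaOf a + 1) * (n.factorial : ℝ))) * (z / 2) ^ (2 * n)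

lemma abs_jterm (ha : -1 < a) (z : ℝ) (n : ℕ) :
    |jterm a z n| = ((z/2)^2) ^ n / (Real.Gamma ((n : ℝ) + alphaOf a + 1) * (n.factorial : ℝ)) := by
  have hG := gamma_shift_pos ha n
  have hf : (0:ℝ) < n.factorial := by positivity
  have h1 : |(-1:ℝ)^n| = 1 := by simp
  have h2 : |(z/2)^(2*n)| = ((z/2)^2)^n := by
    rw [pow_mul, abs_of_nonneg (pow_nonneg (sq_nonneg _) n)]
  rw [jterm, abs_mul, abs_div, h1, h2, abs_of_pos (by positivity)]
  ring

lemma summable_jterm (ha : -1 < a) (z : ℝ) : Summable (jterm a z) := by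
  apply Summable.of_abs
  have : (fun n : ℕ => |jterm a z n|)
      = fun n : ℕ => ((z/2)^2) ^ n / (Real.Gamma ((n : ℝ) + alphaOf a + 1) * (n.factorial : ℝ)) := by
    funext n; exact abs_jterm ha z n
  rw [this]
  exact summable_base ha (by positivity)

lemma hasSum_Jt (ha : -1 < a) (z : ℝ) :
    HasSum (fun n => Real.Gamma (alphaOf a + 1) * jterm a z n) (Jt a z) :=
  (summable_jterm ha z).hasSum.mul_left _

lemma Jt_zero (ha : -1 < a) : Jt a 0 = 1 := by
  have hG := gamma_shift_pos ha 0
  simp only [Nat.cast_zero, zero_add] at hG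
  rw [Jt]
  rw [tsum_eq_single 0 (by
    intro n hn
    have h2n : 2 * n ≠ 0 := by omega
    simp [zero_pow h2n])]
  simp only [pow_zero, Nat.cast_zero, zero_add, Nat.factorial_zero, Nat.cast_one, mul_one,
    one_div, mul_zero]
  field_simp

lemma continuous_Jt (ha : -1 < a) : Continuous (Jt a) := by
  apply Continuous.mul continuous_const
  rw [continuous_iff_continuousAt]
  intro x₀
  set R : ℝ := |x₀| + 1 with hR
  have hx₀ : x₀ ∈ Set.Ioo (-R) R := by
    constructor <;> [nlinarith [abs_nonneg x₀, neg_abs_le x₀]; nlinarith [le_abs_self x₀]]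
  apply ContinuousOn.continuousAt (s := Set.Icc (-R) R) _
    (Icc_mem_nhds hx₀.1 hx₀.2)
  apply continuousOn_tsum (u := fun n : ℕ =>
    ((R/2)^2) ^ n / (Real.Gamma ((n : ℝ) + alphaOf a + 1) * (n.factorial : ℝ)))
  · intro i; fun_prop
  · exact summable_base ha (by positivity)
  · intro n z hz
    have h1 : |z| ≤ R := abs_le.mpr ⟨hz.1, hz.2⟩
    have hG := gamma_shift_pos ha n
    have hf : (0:ℝ) < n.factorial := by positivity
    have heq : ‖((-1 : ℝ) ^ n / (Real.Gamma ((n : ℝ) + alphaOf a + 1) * (n.factorial : ℝ)))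
        * (z / 2) ^ (2 * n)‖ = |jterm a z n| := by rw [Real.norm_eq_abs]; rfl
    rw [heq, abs_jterm ha z]
    have hzR : (z/2)^2 ≤ (R/2)^2 := by nlinarith [abs_nonneg z, neg_abs_le z, le_abs_self z]
    gcongr

lemma Jt_pos_of_lt_za (ha : -1 < a) {v : ℝ} (h0 : 0 ≤ v) (hv : v < za a) : 0 < Jt a v := by
  have hbdd : BddBelow {z : ℝ | 0 < z ∧ Jt a z = 0} := ⟨0, fun y hy => hy.1.le⟩
  have hne : ∀ w, 0 < w → w < za a → Jt a w ≠ 0 := by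
    intro w hw hwlt hJ
    exact absurd (csInf_le hbdd ⟨hw, hJ⟩) (not_le.mpr hwlt)
  rcases eq_or_lt_of_le h0 with h|h
  · rw [← h, Jt_zero ha]; norm_num
  · rcases lt_trichotomy (Jt a v) 0 with hneg|hzero|hpos
    · exfalso
      have hcont : ContinuousOn (Jt a) (Set.Icc 0 v) := (continuous_Jt ha).continuousOn
      have : (0:ℝ) ∈ Set.Ioo (Jt a v) (Jt a 0) := by
        rw [Jt_zero ha]; exact ⟨hneg, one_pos⟩
      obtain ⟨c, hc, hcJ⟩ := intermediate_value_Ioo' h.le hcont this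
      exact hne c hc.1 (hc.2.trans hv) hcJ
    · exact absurd hzero (hne v h hv)
    · exact hpos

/-- Interval integrability of the kernel times a continuous function. -/
lemma ii_kernel {b : ℝ} (hb : -1 < b) (x : ℝ) {h : ℝ → ℝ}
    (hh : ContinuousOn h (Set.uIcc 0 1)) :
    IntervalIntegrable (fun t => (1 - max t x) * t ^ b * h t) MeasureTheory.volume 0 1 := by
  have h1 : IntervalIntegrable (fun t : ℝ => t ^ b) MeasureTheory.volume 0 1 :=
    intervalIntegrable_rpow' hb
  have h2 := (h1.continuousOn_mul (g := fun t => 1 - max t x)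
    (by fun_prop)).mul_continuousOn hh
  exact h2

lemma integral_kernel_rpow {b : ℝ} (hb : -1 < b) {x : ℝ} (hx : x ∈ Set.Icc (0:ℝ) 1) :
    ∫ t in (0:ℝ)..1, (1 - max t x) * t ^ b
      = (1 - x ^ (b+2)) / ((b+1)*(b+2)) := by
  obtain ⟨h0x, hx1⟩ := hx
  have hb1 : (0:ℝ) < b + 1 := by linarith
  have hb2 : (0:ℝ) < b + 2 := by linarith
  have hii : ∀ u v : ℝ, IntervalIntegrable (fun t => (1 - max t x) * t ^ b)
      MeasureTheory.volume u v := fun u v =>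
    (intervalIntegrable_rpow' hb).continuousOn_mul (by fun_prop)
  have hsplit : ∫ t in (0:ℝ)..1, (1 - max t x) * t ^ b
      = (∫ t in (0:ℝ)..x, (1 - max t x) * t ^ b) + ∫ t in x..1, (1 - max t x) * t ^ b :=
    (integral_add_adjacent_intervals (hii 0 x) (hii x 1)).symm
  have hI1 : ∫ t in (0:ℝ)..x, (1 - max t x) * t ^ b = (1-x) * (x ^ (b+1) / (b+1)) := by
    rw [integral_congr (g := fun t => (1-x) * t ^ b) (by
      intro t ht
      rw [Set.uIcc_of_le h0x] at ht
      dsimp only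
      rw [max_eq_right ht.2])]
    rw [intervalIntegral.integral_const_mul, integral_rpow (Or.inl hb), Real.zero_rpow (ne_of_gt hb1)]
    ring
  have hI2 : ∫ t in x..1, (1 - max t x) * t ^ b
      = ((1:ℝ) ^ (b+1) - x ^ (b+1)) / (b+1) - ((1:ℝ) ^ (b+2) - x ^ (b+2)) / (b+2) := by
    rw [integral_congr (g := fun t => t ^ b - t ^ (b+1)) (by
      intro t ht
      rw [Set.uIcc_of_le hx1] at ht
      have ht0 : 0 ≤ t := le_trans h0x ht.1
      dsimp only
      rw [max_eq_left ht.1]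
      have : t ^ (b+1) = t ^ b * t := by
        have h := Real.rpow_add' (x := t) (y := b) (z := 1) ht0 (by linarith)
        rw [Real.rpow_one] at h
        exact h
      rw [this]; ring)]
    rw [integral_sub (intervalIntegrable_rpow' hb) (intervalIntegrable_rpow' (by linarith)),
      integral_rpow (Or.inl hb), integral_rpow (Or.inl (by linarith : (-1:ℝ) < b + 1))]
    rw [show b + 1 + 1 = b + 2 by ring]
  have hx2 : x ^ (b+2) = x ^ (b+1) * x := by
    have h := Real.rpow_add' (x := x) (y := b+1) (z := 1) h0x (by linarith)
    rw [Real.rpow_one] at h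
    rw [show b + 2 = b + 1 + 1 by ring, h]
  rw [hsplit, hI1, hI2, Real.one_rpow, Real.one_rpow, hx2]
  field_simp
  ring

/-- The integral operator. -/
def Tmap (a : ℝ) (h : ℝ → ℝ) (x : ℝ) : ℝ :=
  ∫ t in (0:ℝ)..1, (1 - max t x) * t ^ a * h t


lemma uIcc01 : Set.uIcc (0:ℝ) 1 = Set.Icc 0 1 := Set.uIcc_of_le zero_le_one

lemma kernel_nonneg {x t : ℝ} (ht : t ∈ Set.Icc (0:ℝ) 1) (hx : x ∈ Set.Icc (0:ℝ) 1) :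
    0 ≤ (1 - max t x) * t ^ a := by
  have hm : max t x ≤ 1 := max_le ht.2 hx.2
  exact mul_nonneg (by linarith) (Real.rpow_nonneg ht.1 a)

lemma tmap_nonneg {h : ℝ → ℝ} (hh : ∀ t ∈ Set.Icc (0:ℝ) 1, 0 ≤ h t)
    {x : ℝ} (hx : x ∈ Set.Icc (0:ℝ) 1) : 0 ≤ Tmap a h x := by
  apply intervalIntegral.integral_nonneg zero_le_one
  intro t ht
  exact mul_nonneg (kernel_nonneg ht hx) (hh t ht)

lemma tmap_mono (ha : -1 < a) {f1 f2 : ℝ → ℝ} (hc1 : ContinuousOn f1 (Set.Icc 0 1))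
    (hc2 : ContinuousOn f2 (Set.Icc 0 1)) (hle : ∀ t ∈ Set.Icc (0:ℝ) 1, f1 t ≤ f2 t)
    {x : ℝ} (hx : x ∈ Set.Icc (0:ℝ) 1) : Tmap a f1 x ≤ Tmap a f2 x := by
  apply intervalIntegral.integral_mono_on zero_le_one
    (ii_kernel ha x (uIcc01 ▸ hc1)) (ii_kernel ha x (uIcc01 ▸ hc2))
  intro t ht
  have h3 : 0 ≤ (1 - max t x) * t ^ a := kernel_nonneg ht hx
  have h4 := hle t ht
  calc (1 - max t x) * t ^ a * f1 t = ((1 - max t x) * t ^ a) * f1 t := by ring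
    _ ≤ ((1 - max t x) * t ^ a) * f2 t := mul_le_mul_of_nonneg_left h4 h3
    _ = (1 - max t x) * t ^ a * f2 t := by ring

lemma tmap_comb (ha : -1 < a) {h1 h2 h3 : ℝ → ℝ} (c d : ℝ) (hc1 : ContinuousOn h1 (Set.Icc 0 1))
    (hc2 : ContinuousOn h2 (Set.Icc 0 1)) (hc3 : ContinuousOn h3 (Set.Icc 0 1))
    (heq : ∀ t ∈ Set.Icc (0:ℝ) 1, h1 t = c * h2 t + d * h3 t) (x : ℝ) :
    Tmap a h1 x = c * Tmap a h2 x + d * Tmap a h3 x := by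
  unfold Tmap
  rw [integral_congr (g := fun t => c * ((1 - max t x) * t ^ a * h2 t)
      + d * ((1 - max t x) * t ^ a * h3 t)) (by
    intro t ht
    rw [uIcc01] at ht
    dsimp only
    rw [heq t ht]; ring)]
  rw [integral_add ((ii_kernel ha x (uIcc01 ▸ hc2)).const_mul c)
    ((ii_kernel ha x (uIcc01 ▸ hc3)).const_mul d), intervalIntegral.integral_const_mul, intervalIntegral.integral_const_mul]

lemma tmap_continuous (ha : -1 < a) {h : ℝ → ℝ} (hh : ContinuousOn h (Set.Icc 0 1)) :
    Continuous (Tmap a h) := by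
  have habs : ContinuousOn (fun t => |h t|) (Set.Icc (0:ℝ) 1) := hh.abs
  have hI : IntervalIntegrable (fun t => t ^ a * |h t|) MeasureTheory.volume 0 1 :=
    (intervalIntegrable_rpow' ha).mul_continuousOn (uIcc01 ▸ habs)
  set C : ℝ := ∫ t in (0:ℝ)..1, t ^ a * |h t| with hC
  have hC0 : 0 ≤ C := intervalIntegral.integral_nonneg zero_le_one (fun t ht => by
    have := Real.rpow_nonneg ht.1 a
    positivity)
  apply LipschitzWith.continuous (K := ⟨C, hC0⟩)
  apply LipschitzWith.of_dist_le_mul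
  intro x y
  rw [Real.dist_eq, Real.dist_eq]
  have hint : ∀ u : ℝ, IntervalIntegrable (fun t => (1 - max t u) * t ^ a * h t)
      MeasureTheory.volume 0 1 := fun u => ii_kernel ha u (uIcc01 ▸ hh)
  have hsub : Tmap a h x - Tmap a h y
      = ∫ t in (0:ℝ)..1, ((1 - max t x) * t ^ a * h t - (1 - max t y) * t ^ a * h t) :=
    (integral_sub (hint x) (hint y)).symm
  rw [hsub]
  calc |∫ t in (0:ℝ)..1, ((1 - max t x) * t ^ a * h t - (1 - max t y) * t ^ a * h t)|
      ≤ ∫ t in (0:ℝ)..1, |(1 - max t x) * t ^ a * h t - (1 - max t y) * t ^ a * h t| := by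
        have := intervalIntegral.norm_integral_le_integral_norm
          (f := fun t => (1 - max t x) * t ^ a * h t - (1 - max t y) * t ^ a * h t)
          (μ := MeasureTheory.volume) (zero_le_one)
        simpa using this
    _ ≤ ∫ t in (0:ℝ)..1, |x - y| * (t ^ a * |h t|) := by
        apply intervalIntegral.integral_mono_on zero_le_one
          ((hint x).sub (hint y)).abs (hI.const_mul _)
        intro t ht
        have key : |(1 - max t x) * t ^ a * h t - (1 - max t y) * t ^ a * h t|
            = |max t y - max t x| * (t ^ a * |h t|) := by
          rw [show (1 - max t x) * t ^ a * h t - (1 - max t y) * t ^ a * h t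
            = (max t y - max t x) * (t ^ a * h t) by ring, abs_mul, abs_mul,
            abs_of_nonneg (Real.rpow_nonneg ht.1 a)]
        rw [key]
        apply mul_le_mul_of_nonneg_right _
          (mul_nonneg (Real.rpow_nonneg ht.1 a) (abs_nonneg _))
        have hmx := abs_max_sub_max_le_max t y t x
        simp only [sub_self, abs_zero] at hmx
        calc |max t y - max t x| ≤ max |t - t| |y - x| := abs_max_sub_max_le_max t y t x
          _ = |y - x| := by simp
          _ = |x - y| := abs_sub_comm _ _
    _ = C * |x - y| := by rw [intervalIntegral.integral_const_mul, ← hC]; ring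

def eJ (a z : ℝ) (n : ℕ) : ℝ := Real.Gamma (alphaOf a + 1) * jterm a (2*z/(a+2)) n
def gJ (a z : ℝ) (x : ℝ) : ℝ := Jt a (2/(a+2)*z*x^((a+2)/2))


lemma summable_eJ (ha : -1 < a) (z : ℝ) : Summable (eJ a z) :=
  (summable_jterm ha _).mul_left _

lemma hasSum_gJ (ha : -1 < a) (z : ℝ) {x : ℝ} (hx : x ∈ Set.Icc (0:ℝ) 1) :
    HasSum (fun n : ℕ => eJ a z n * x ^ ((a+2) * (n:ℝ))) (gJ a z x) := by
  have h := hasSum_Jt ha (2/(a+2)*z*x^((a+2)/2))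
  have heq : (fun n : ℕ => Real.Gamma (alphaOf a + 1) * jterm a (2/(a+2)*z*x^((a+2)/2)) n)
      = fun n : ℕ => eJ a z n * x ^ ((a+2) * (n:ℝ)) := by
    funext n
    unfold eJ jterm
    have h1 : (2/(a+2)*z*x^((a+2)/2))/2 = (2*z/(a+2))/2 * x^((a+2)/2) := by ring
    have h3 : (x^((a+2)/2))^(2*n) = x ^ ((a+2) * (n:ℝ)) := by
      rw [← Real.rpow_natCast (x ^ ((a+2)/2)) (2*n), ← Real.rpow_mul hx.1,
        show (a+2)/2 * ((2*n : ℕ) : ℝ) = (a+2)*(n:ℝ) by push_cast; ring]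
    rw [h1, mul_pow, h3]; ring
  rw [heq] at h
  exact h

lemma hasSum_eJ_B (ha : -1 < a) (z : ℝ) : HasSum (eJ a z) (gJ a z 1) := by
  have h := hasSum_gJ ha z (x := 1) (by norm_num)
  have heq : (fun n : ℕ => eJ a z n * (1:ℝ) ^ ((a+2) * (n:ℝ))) = eJ a z := by
    funext n; rw [Real.one_rpow, mul_one]
  rwa [heq] at h

lemma eJ_rec (ha : -1 < a) (z : ℝ) (n : ℕ) :
    z^2 * eJ a z n
      = -(eJ a z (n+1)) * (((a+2)*((n:ℝ)+1)-1) * ((a+2)*((n:ℝ)+1))) := by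
  have hp : (0:ℝ) < a + 2 := by linarith
  have hΓpos := gamma_shift_pos ha n
  have hα1 := alpha1_pos ha
  have hna : (0:ℝ) < (n:ℝ) + alphaOf a + 1 := by
    have : (0:ℝ) ≤ n := n.cast_nonneg; linarith
  have hΓ : Real.Gamma (((n:ℝ)+1) + alphaOf a + 1)
      = ((n:ℝ) + alphaOf a + 1) * Real.Gamma ((n:ℝ) + alphaOf a + 1) := by
    rw [show ((n:ℝ)+1) + alphaOf a + 1 = ((n:ℝ) + alphaOf a + 1) + 1 by ring,
      Real.Gamma_add_one (ne_of_gt hna)]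
  have hkey : (a+2)*((n:ℝ) + alphaOf a + 1) = (a+2)*((n:ℝ)+1)-1 := by
    unfold alphaOf; field_simp; ring
  have hfpos : (0:ℝ) < n.factorial := by positivity
  unfold eJ jterm
  rw [Nat.factorial_succ]
  push_cast
  rw [hΓ, show 2*(n+1) = 2*n + 2 by ring, pow_add, pow_succ, ← hkey]
  field_simp
  have h2a : (2+a)⁻¹ * (2+a) = 1 := inv_mul_cancel₀ (by linarith)
  linear_combination (-(z^2*z^(2*n)*(2+a)⁻¹^(2*n)*(1+(2+a)⁻¹*(2+a)))) * h2a

lemma key_identity (ha : -1 < a) {z : ℝ} (hz : 0 < z) {x : ℝ} (hx : x ∈ Set.Icc (0:ℝ) 1) :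
    Tmap a (gJ a z) x = (gJ a z x - gJ a z 1) / z ^ 2 := by
  have hp : (0:ℝ) < a + 2 := by linarith
  set μ := MeasureTheory.volume.restrict (Set.Ioc (0:ℝ) 1) with hμ
  set F : ℕ → ℝ → ℝ :=
    fun n t => eJ a z n * ((1 - max t x) * t ^ (a + (a+2)*(n:ℝ))) with hF
  have hbn : ∀ n : ℕ, -1 < a + (a+2)*(n:ℝ) := fun n => by
    have h0 : (0:ℝ) ≤ n := n.cast_nonneg; nlinarith
  have hii : ∀ n : ℕ, IntervalIntegrable
      (fun t => (1 - max t x) * t ^ (a + (a+2)*(n:ℝ))) MeasureTheory.volume 0 1 :=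
    fun n => (intervalIntegrable_rpow' (hbn n)).continuousOn_mul (by fun_prop)
  have hInt : ∀ n : ℕ, Integrable (F n) μ := fun n =>
    (intervalIntegrable_iff_integrableOn_Ioc_of_le zero_le_one).mp ((hii n).const_mul _)
  -- the weight function t ^ a
  set C : ℝ := ∫ t in Set.Ioc (0:ℝ) 1, t ^ a with hCdef
  -- norm bound
  have hbound : ∀ n : ℕ, ∫ t, ‖F n t‖ ∂μ ≤ |eJ a z n| * C := by
    intro n
    have hIa : IntegrableOn (fun t : ℝ => |eJ a z n| * t ^ a) (Set.Ioc (0:ℝ) 1) :=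
      (intervalIntegrable_iff_integrableOn_Ioc_of_le zero_le_one).mp
        ((intervalIntegrable_rpow' ha).const_mul _)
    have hmono := setIntegral_mono_on ((hInt n).norm) hIa measurableSet_Ioc (by
      intro t ht
      have ht0 : 0 < t := ht.1
      have hmax1 : max t x ≤ 1 := max_le ht.2 hx.2
      have hmax0 : 0 ≤ max t x := le_max_of_le_left ht0.le
      have htb : t ^ (a + (a+2)*(n:ℝ)) = t ^ a * t ^ ((a+2)*(n:ℝ)) :=
        Real.rpow_add ht0 _ _
      have hle1 : t ^ ((a+2)*(n:ℝ)) ≤ 1 :=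
        Real.rpow_le_one ht0.le ht.2 (by positivity)
      have hta : (0:ℝ) ≤ t ^ a := Real.rpow_nonneg ht0.le a
      have htpn : (0:ℝ) ≤ t ^ ((a+2)*(n:ℝ)) := Real.rpow_nonneg ht0.le _
      have : ‖F n t‖ = |eJ a z n| * ((1 - max t x) * (t ^ a * t ^ ((a+2)*(n:ℝ)))) := by
        rw [hF]
        dsimp only
        rw [Real.norm_eq_abs, abs_mul, htb,
          abs_of_nonneg (mul_nonneg (by linarith : (0:ℝ) ≤ 1 - max t x)
            (mul_nonneg hta htpn))]
      rw [this]
      apply mul_le_mul_of_nonneg_left _ (abs_nonneg _)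
      calc (1 - max t x) * (t ^ a * t ^ ((a+2)*(n:ℝ)))
          ≤ 1 * (t ^ a * 1) :=
            mul_le_mul (by linarith) (mul_le_mul_of_nonneg_left hle1 hta)
              (mul_nonneg hta htpn) one_pos.le
        _ = t ^ a := by ring)
    calc ∫ t, ‖F n t‖ ∂μ ≤ ∫ t in Set.Ioc (0:ℝ) 1, |eJ a z n| * t ^ a := hmono
      _ = |eJ a z n| * C := by rw [hCdef, ← MeasureTheory.integral_const_mul]
  have hsumnorm : Summable fun n => ∫ t, ‖F n t‖ ∂μ := by
    apply Summable.of_nonneg_of_le (fun n => integral_nonneg fun t => norm_nonneg _) hbound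
    exact ((summable_eJ ha z).abs).mul_right C
  have hasS := MeasureTheory.hasSum_integral_of_summable_integral_norm hInt hsumnorm
  -- identify the integral of the tsum with Tmap
  have htsum : ∫ t, (∑' n, F n t) ∂μ = Tmap a (gJ a z) x := by
    have hcongr : ∀ t ∈ Set.Ioc (0:ℝ) 1,
        (∑' n, F n t) = (1 - max t x) * t ^ a * gJ a z t := by
      intro t ht
      have hg := (hasSum_gJ ha z (x := t) ⟨ht.1.le, ht.2⟩).mul_left ((1 - max t x) * t ^ a)
      have heq : (fun n : ℕ => (1 - max t x) * t ^ a * (eJ a z n * t ^ ((a+2) * (n:ℝ))))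
          = fun n => F n t := by
        funext n
        rw [hF]
        dsimp only
        rw [Real.rpow_add ht.1]
        ring
      rw [heq] at hg
      exact hg.tsum_eq
    rw [MeasureTheory.setIntegral_congr_fun measurableSet_Ioc hcongr]
    rw [Tmap, integral_of_le zero_le_one]
  -- per-term values
  have hval : ∀ n : ℕ, ∫ t, F n t ∂μ
      = -(1/z^2) * (eJ a z (n+1) * (1 - x ^ ((a+2)*((n:ℝ)+1)))) := by
    intro n
    have h1 : ∫ t, F n t ∂μ
        = eJ a z n * ∫ t in Set.Ioc (0:ℝ) 1, ((1 - max t x) * t ^ (a + (a+2)*(n:ℝ))) := by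
      rw [hF, ← MeasureTheory.integral_const_mul]
    have h2 : ∫ t in Set.Ioc (0:ℝ) 1, ((1 - max t x) * t ^ (a + (a+2)*(n:ℝ)))
        = (1 - x ^ ((a + (a+2)*(n:ℝ))+2))
          / (((a + (a+2)*(n:ℝ))+1) * ((a + (a+2)*(n:ℝ))+2)) := by
      rw [← integral_of_le zero_le_one]
      exact integral_kernel_rpow (hbn n) hx
    have he2 : (a + (a+2)*(n:ℝ)) + 2 = (a+2)*((n:ℝ)+1) := by ring
    have he1 : (a + (a+2)*(n:ℝ)) + 1 = (a+2)*((n:ℝ)+1) - 1 := by ring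
    have hq1 : (0:ℝ) < (a+2)*((n:ℝ)+1) - 1 := by
      have h0 : (0:ℝ) ≤ n := n.cast_nonneg; nlinarith
    have hq2 : (0:ℝ) < (a+2)*((n:ℝ)+1) := by
      have h0 : (0:ℝ) ≤ n := n.cast_nonneg; nlinarith
    rw [h1, h2, he2, he1]
    have hrec := eJ_rec ha z n
    field_simp
    linear_combination (1 - x ^ ((a+2)*((n:ℝ)+1))) * hrec
  -- the shifted sum
  have h4 : HasSum (fun n : ℕ => eJ a z n * (1 - x ^ ((a+2) * (n:ℝ))))
      (gJ a z 1 - gJ a z x) := by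
    have h3 := (hasSum_eJ_B ha z).sub (hasSum_gJ ha z hx)
    have heq : (fun n : ℕ => eJ a z n - eJ a z n * x ^ ((a+2) * (n:ℝ)))
        = fun n : ℕ => eJ a z n * (1 - x ^ ((a+2) * (n:ℝ))) := by
      funext n; ring
    rwa [heq] at h3
  have h5 : HasSum (fun n : ℕ => eJ a z (n+1) * (1 - x ^ ((a+2)*((n:ℝ)+1))))
      (gJ a z 1 - gJ a z x) := by
    have hzero : eJ a z 0 * (1 - x ^ ((a+2) * ((0:ℕ):ℝ))) = 0 := by
      norm_num
    have := (hasSum_nat_add_iff (f := fun n : ℕ => eJ a z n * (1 - x ^ ((a+2) * (n:ℝ)))) 1).mpr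
      (by
        rw [Finset.range_one, Finset.sum_singleton, hzero, add_zero]
        exact h4)
    have heq : (fun n : ℕ => eJ a z (n+1) * (1 - x ^ ((a+2) * (((n+1:ℕ)):ℝ))))
        = fun n : ℕ => eJ a z (n+1) * (1 - x ^ ((a+2)*((n:ℝ)+1))) := by
      funext n; push_cast; ring_nf
    rwa [heq] at this
  have h6 := h5.mul_left (-(1/z^2))
  have h7 : (fun n : ℕ => ∫ t, F n t ∂μ)
      = fun n : ℕ => -(1/z^2) * (eJ a z (n+1) * (1 - x ^ ((a+2)*((n:ℝ)+1)))) := by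
    funext n; exact hval n
  rw [htsum, h7] at hasS
  have := hasS.unique h6
  rw [this]
  field_simp
  ring
lemma frec_succ_eq (k : ℕ) : frec a (k+1) = Tmap a (frec a k) := rfl

lemma frec_continuous (ha : -1 < a) : ∀ k, Continuous (frec a k) := by
  intro k
  induction k with
  | zero => exact continuous_const
  | succ k ih => rw [frec_succ_eq]; exact tmap_continuous ha ih.continuousOn

lemma frec_nonneg (ha : -1 < a) : ∀ k, ∀ t ∈ Set.Icc (0:ℝ) 1, 0 ≤ frec a k t := by
  intro k
  induction k with
  | zero => intro t _; norm_num [frec]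
  | succ k ih => intro t ht; rw [frec_succ_eq]; exact tmap_nonneg ih ht

lemma continuous_gJ (ha : -1 < a) (z : ℝ) : Continuous (gJ a z) := by
  have hrc : Continuous fun x : ℝ => x ^ ((a+2)/2) :=
    continuous_iff_continuousAt.mpr fun x =>
      Real.continuousAt_rpow_const x _ (Or.inr (by linarith))
  exact (continuous_Jt ha).comp (continuous_const.mul hrc)

theorem main_pos (ha : -1 < a) {z : ℝ} (hz : 0 < z) (hzlt : z < (a + 2) * za a / 2)
    {x : ℝ} (hx : x ∈ Set.Icc (0:ℝ) 1) :
    HasSum (fun k : ℕ => frec a k x * z ^ (2 * k)) (gJ a z x / gJ a z 1) := by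
  have hp : (0:ℝ) < a + 2 := by linarith
  -- the argument is below the first zero
  have harg : 2/(a+2)*z < za a := by
    rw [div_mul_eq_mul_div, div_lt_iff₀ hp]
    nlinarith
  have hgpos : ∀ y ∈ Set.Icc (0:ℝ) 1, 0 < gJ a z y := by
    intro y hy
    have hy0 : (0:ℝ) ≤ y ^ ((a+2)/2) := Real.rpow_nonneg hy.1 _
    have hy1 : y ^ ((a+2)/2) ≤ 1 := Real.rpow_le_one hy.1 hy.2 (by positivity)
    apply Jt_pos_of_lt_za ha (by positivity)
    calc 2/(a+2)*z*y^((a+2)/2) ≤ 2/(a+2)*z*1 := by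
          apply mul_le_mul_of_nonneg_left hy1 (by positivity)
      _ = 2/(a+2)*z := by ring
      _ < za a := harg
  have hg1pos : 0 < gJ a z 1 := hgpos 1 (by norm_num)
  -- upper bound for g
  obtain ⟨Cg, hCg⟩ := isCompact_Icc.exists_bound_of_continuousOn
    ((continuous_gJ ha z).continuousOn (s := Set.Icc (0:ℝ) 1))
  have hCg' : ∀ y ∈ Set.Icc (0:ℝ) 1, gJ a z y ≤ Cg := fun y hy =>
    (le_abs_self _).trans (hCg y hy)
  -- iterates
  set gk : ℕ → ℝ → ℝ := fun K => (Tmap a)^[K] (gJ a z) with hgk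
  have gk_zero : gk 0 = gJ a z := rfl
  have gk_succ : ∀ K, gk (K+1) = Tmap a (gk K) := fun K =>
    Function.iterate_succ_apply' (Tmap a) K (gJ a z)
  have gkcont : ∀ K, Continuous (gk K) := by
    intro K
    induction K with
    | zero => exact continuous_gJ ha z
    | succ K ih => rw [gk_succ]; exact tmap_continuous ha ih.continuousOn
  have gknn : ∀ K, ∀ y ∈ Set.Icc (0:ℝ) 1, 0 ≤ gk K y := by
    intro K
    induction K with
    | zero => exact fun y hy => (hgpos y hy).le
    | succ K ih => intro y hy; rw [gk_succ]; exact tmap_nonneg ih hy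
  have gkub : ∀ K, ∀ y ∈ Set.Icc (0:ℝ) 1, gk K y ≤ Cg * frec a K y := by
    intro K
    induction K with
    | zero => intro y hy; simpa [frec, gk_zero] using hCg' y hy
    | succ K ih =>
      intro y hy
      rw [gk_succ]
      have h1 : Tmap a (gk K) y ≤ Tmap a (fun t => Cg * frec a K t) y :=
        tmap_mono ha (gkcont K).continuousOn
          (continuous_const.mul (frec_continuous ha K)).continuousOn ih hy
      have h2 : Tmap a (fun t => Cg * frec a K t) y = Cg * Tmap a (frec a K) y + 0 := by
        have := tmap_comb ha (h1 := fun t => Cg * frec a K t) (h2 := frec a K)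
          (h3 := frec a K) Cg 0
          (continuous_const.mul (frec_continuous ha K)).continuousOn
          (frec_continuous ha K).continuousOn (frec_continuous ha K).continuousOn
          (fun t _ => by ring) y
        simpa using this
      rw [h2] at h1
      simpa [frec_succ_eq] using h1
  -- the key recursion
  have keyId : ∀ y ∈ Set.Icc (0:ℝ) 1,
      gJ a z y = gJ a z 1 + z^2 * Tmap a (gJ a z) y := by
    intro y hy
    rw [key_identity ha hz hy]
    field_simp
    ring
  have iterId : ∀ K, ∀ y ∈ Set.Icc (0:ℝ) 1,
      gk K y = gJ a z 1 * frec a K y + z^2 * gk (K+1) y := by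
    intro K
    induction K with
    | zero =>
      intro y hy
      have := keyId y hy
      rw [gk_zero, gk_succ, gk_zero]
      simpa [frec] using this
    | succ K ih =>
      intro y hy
      rw [gk_succ]
      have hcomb := tmap_comb ha (h1 := gk K) (h2 := frec a K) (h3 := gk (K+1))
        (gJ a z 1) (z^2) (gkcont K).continuousOn (frec_continuous ha K).continuousOn
        (gkcont (K+1)).continuousOn (fun t ht => ih t ht) y
      rw [hcomb, gk_succ (K+1)]
      rfl
  -- partial sums
  have sumId : ∀ K, gJ a z x = gJ a z 1 * (∑ k ∈ Finset.range K, frec a k x * z ^ (2*k))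
      + z^(2*K) * gk K x := by
    intro K
    induction K with
    | zero => simp [gk_zero]
    | succ K ih =>
      rw [Finset.sum_range_succ, show 2*(K+1) = 2*K+2 by ring, pow_add]
      calc gJ a z x = gJ a z 1 * (∑ k ∈ Finset.range K, frec a k x * z ^ (2*k))
            + z^(2*K) * gk K x := ih
        _ = gJ a z 1 * (∑ k ∈ Finset.range K, frec a k x * z ^ (2*k))
            + z^(2*K) * (gJ a z 1 * frec a K x + z^2 * gk (K+1) x) := by
              rw [iterId K x hx]
        _ = gJ a z 1 * ((∑ k ∈ Finset.range K, frec a k x * z ^ (2*k))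
              + frec a K x * z^(2*K)) + z^(2*K) * z^2 * gk (K+1) x := by ring
  -- summability
  have hfnn : ∀ k : ℕ, 0 ≤ frec a k x * z ^ (2*k) := fun k =>
    mul_nonneg (frec_nonneg ha k x hx) (by positivity)
  have hble : ∀ K, ∑ k ∈ Finset.range K, frec a k x * z ^ (2*k) ≤ gJ a z x / gJ a z 1 := by
    intro K
    rw [le_div_iff₀ hg1pos]
    have h1 := sumId K
    have h2 : 0 ≤ z^(2*K) * gk K x := mul_nonneg (by positivity) (gknn K x hx)
    nlinarith
  have hsummable : Summable (fun k : ℕ => frec a k x * z ^ (2*k)) :=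
    summable_of_sum_range_le hfnn hble
  have htends0 := hsummable.tendsto_atTop_zero
  -- remainder goes to 0
  have hrem : Tendsto (fun K => z^(2*K) * gk K x) atTop (𝓝 0) := by
    refine tendsto_of_tendsto_of_tendsto_of_le_of_le (g := fun _ => (0:ℝ))
      (h := fun K => Cg * (frec a K x * z^(2*K))) tendsto_const_nhds
      (by simpa using htends0.const_mul Cg) (fun K => ?_) (fun K => ?_)
    · exact mul_nonneg (by positivity) (gknn K x hx)
    · calc z^(2*K) * gk K x ≤ z^(2*K) * (Cg * frec a K x) :=
            mul_le_mul_of_nonneg_left (gkub K x hx) (by positivity)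
        _ = Cg * (frec a K x * z^(2*K)) := by ring
  -- partial sums converge to the claimed value
  have hSform : ∀ K, ∑ k ∈ Finset.range K, frec a k x * z ^ (2*k)
      = (gJ a z x - z^(2*K) * gk K x) / gJ a z 1 := by
    intro K
    have h1 := sumId K
    field_simp
    linarith
  have hS : Tendsto (fun K => ∑ k ∈ Finset.range K, frec a k x * z ^ (2*k)) atTop
      (𝓝 (gJ a z x / gJ a z 1)) := by
    have h2 : Tendsto (fun K => (gJ a z x - z^(2*K) * gk K x) / gJ a z 1) atTop
        (𝓝 ((gJ a z x - 0) / gJ a z 1)) := (tendsto_const_nhds.sub hrem).div_const _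
    rw [sub_zero] at h2
    exact (funext hSform : _) ▸ h2
  exact (hsummable.hasSum_iff_tendsto_nat).mpr hS

end Aux

/-- Theorem 6.1, generating function of the recursive polynomials. -/
theorem recursive_polynomials_generating_function (a : ℝ) (ha : -1 < a) :
    ∀ z : ℝ, 0 ≤ z → z < (a + 2) * za a / 2 → ∀ x ∈ Set.Icc (0 : ℝ) 1,
      HasSum (fun k : ℕ => frec a k x * z ^ (2 * k))
        (Jt a (2 / (a + 2) * z * x ^ ((a + 2) / 2)) / Jt a (2 / (a + 2) * z)) := by
  intro z hz0 hzlt x hx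
  rcases eq_or_lt_of_le hz0 with h0|hz
  · -- z = 0
    subst h0
    have h2 : (2/(a+2)*(0:ℝ)*x^((a+2)/2)) = 0 := by ring
    have h3 : 2/(a+2)*(0:ℝ) = 0 := by ring
    rw [h2, h3, Aux.Jt_zero ha, show (1:ℝ)/1 = 1 by norm_num]
    have hs := hasSum_single (f := fun k : ℕ => frec a k x * (0:ℝ)^(2*k)) 0
      (fun k hk => by
        have hk2 : 2*k ≠ 0 := by omega
        simp [zero_pow hk2])
    simpa [frec] using hs
  · have hmain := Aux.main_pos ha hz hzlt hx
    have hg1 : Aux.gJ a z 1 = Jt a (2/(a+2)*z) := by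
      unfold Aux.gJ; rw [Real.one_rpow, mul_one]
    rw [← hg1]
    exact hmain
end
end
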